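/- Let D be a positive integer. Every prototype in 𝒫_D is equivalent, under the equivalence relation generated by the Butterfly moves, to a reduced prototype, i.e. to a prototype of the form (w, 1, 0, e) ∈ 𝒫_D. -/

import Mathlib

/-- gcd of four integers. -/
def gcd4 (a b c d : ℤ) : ℕ := Int.gcd a (Int.gcd b (Int.gcd c d : ℤ) : ℤ)

/-- The prototype set `𝒫_D`: quadruples `(w,h,t,e)` with `w > 0`, `h > 0`,
`0 ≤ t < gcd(w,h)`, `e + 2h < w`, `gcd(w,h,t,e) = 1` and `D = e² + 8wh`. -/
def IsProto (D : ℤ) (p : ℤ × ℤ × ℤ × ℤ) : Prop :=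
  0 < p.1 ∧ 0 < p.2.1 ∧ 0 ≤ p.2.2.1 ∧ p.2.2.1 < (Int.gcd p.1 p.2.1 : ℤ) ∧
  p.2.2.2 + 2 * p.2.1 < p.1 ∧ gcd4 p.1 p.2.1 p.2.2.1 p.2.2.2 = 1 ∧
  D = p.2.2.2 ^ 2 + 8 * p.1 * p.2.1

/-- The Butterfly move `B_q` (for a positive integer `q`) relates `(w,h,t,e)` to
`(w',h',t',e')` whenever `(e+4qh)² < D`, `e' = -e-4qh` and `h' = gcd(qh, w+qt)`. -/
def BMove (D q : ℤ) (p p' : ℤ × ℤ × ℤ × ℤ) : Prop :=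
  (p.2.2.2 + 4 * q * p.2.1) ^ 2 < D ∧
  p'.2.2.2 = -p.2.2.2 - 4 * q * p.2.1 ∧
  p'.2.1 = (Int.gcd (q * p.2.1) (p.1 + q * p.2.2.1) : ℤ)

/-- The Butterfly move `B_∞` relates `(w,h,t,e)` to `(w',h',t',e')` whenever
`e' = -e-4h` and `h' = gcd(t,h)`. -/
def BMoveInf (p p' : ℤ × ℤ × ℤ × ℤ) : Prop :=
  p'.2.2.2 = -p.2.2.2 - 4 * p.2.1 ∧ p'.2.1 = (Int.gcd p.2.2.1 p.2.1 : ℤ)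

/-- Two prototypes of `𝒫_D` are related when some Butterfly move
`B_q`, `q ∈ {1,2,3,…} ∪ {∞}`, takes one to the other. -/
def Butterfly (D : ℤ) (p p' : ℤ × ℤ × ℤ × ℤ) : Prop :=
  IsProto D p ∧ IsProto D p' ∧ ((∃ q : ℤ, 0 < q ∧ BMove D q p p') ∨ BMoveInf p p')

section ButterflyAux

private lemma gcd_shift (a b c : ℤ) : Int.gcd a (b + a * c) = Int.gcd a b := by
  have g1 : (Int.gcd a (b + a * c) : ℤ) ∣ b := by
    have hd := dvd_sub (Int.gcd_dvd_right (a := a) (b := b + a * c))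
      ((Int.gcd_dvd_left (a := a) (b := b + a * c)).mul_right c)
    have hb : b + a * c - a * c = b := by ring
    rwa [hb] at hd
  have g2 : (Int.gcd a b : ℤ) ∣ b + a * c :=
    dvd_add (Int.gcd_dvd_right _ _) ((Int.gcd_dvd_left _ _).mul_right c)
  exact Nat.dvd_antisymm
    (Int.natCast_dvd_natCast.mp (Int.dvd_coe_gcd (Int.gcd_dvd_left _ _) g1))
    (Int.natCast_dvd_natCast.mp (Int.dvd_coe_gcd (Int.gcd_dvd_left _ _) g2))

private lemma gcd4_zero (a b d : ℤ) : gcd4 a b 0 d = Int.gcd a (Int.gcd b d) := by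
  simp only [gcd4, Int.gcd, Int.natAbs_natCast, Int.natAbs_zero, Nat.gcd_zero_left,
    Int.natAbs_abs]

private lemma gcd4_one (a b d : ℤ) : gcd4 a b 1 d = 1 := by
  simp [gcd4, Int.gcd]

private lemma sq_between {a b x D : ℤ} (ha : a ^ 2 < D) (hb : b ^ 2 < D)
    (hax : a ≤ x) (hxb : x ≤ b) : x ^ 2 < D := by
  rcases le_or_gt 0 x with h0 | h0
  · nlinarith
  · nlinarith

/-- Construction of the target prototype of a Butterfly move with `e' = -e-4h`. -/
private lemma build (D w h t e h' : ℤ) (hp : IsProto D (w, h, t, e))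
    (h'pos : 0 < h') (h'le : h' ≤ h) (hdvd : h' ∣ h * (w - e - 2 * h)) :
    ∃ w' t', IsProto D (w', h', t', -e - 4 * h) := by
  obtain ⟨hw, hh, ht0, htlt, hew, hg, hDe⟩ := hp
  simp only at hw hh ht0 htlt hew hg hDe
  obtain ⟨w', hw'⟩ := hdvd
  have hM : 0 < h * (w - e - 2 * h) := mul_pos hh (by linarith)
  have hw'pos : 0 < w' := by nlinarith [hM, h'pos]
  have hD' : D = (-e - 4 * h) ^ 2 + 8 * w' * h' := by linear_combination hDe + 8 * hw'
  have ha : (-e - 4 * h) ^ 2 < D := by nlinarith [hM]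
  have hb : (-e) ^ 2 < D := by nlinarith [mul_pos hw hh]
  have hsq : (-e - 4 * h + 4 * h') ^ 2 < D :=
    sq_between ha hb (by linarith) (by linarith)
  have hEW : -e - 4 * h + 2 * h' < w' := by nlinarith [hsq, h'pos, hD']
  have hwne : w' ≠ 0 := hw'pos.ne'
  have hgw : (0 : ℤ) < (Int.gcd w' h' : ℤ) := by
    exact_mod_cast Int.gcd_pos_iff.mpr (Or.inl hwne)
  by_cases hg1 : Int.gcd w' (Int.gcd h' (-e - 4 * h)) = 1
  · refine ⟨w', 0, hw'pos, h'pos, le_refl 0, hgw, ?_, ?_, hD'⟩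
    · show -e - 4 * h + 2 * h' < w'
      exact hEW
    · show gcd4 w' h' 0 (-e - 4 * h) = 1
      rw [gcd4_zero]; exact hg1
  · have hgne : Int.gcd w' (Int.gcd h' (-e - 4 * h)) ≠ 0 := by
      intro h0
      exact hwne (Int.gcd_eq_zero_iff.mp h0).1
    have hg2 : 2 ≤ Int.gcd w' (Int.gcd h' (-e - 4 * h)) := by omega
    have d1 : ((Int.gcd w' (Int.gcd h' (-e - 4 * h)) : ℤ)) ∣ w' := Int.gcd_dvd_left _ _
    have d2 : ((Int.gcd w' (Int.gcd h' (-e - 4 * h)) : ℤ)) ∣ h' := by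
      exact dvd_trans (Int.gcd_dvd_right _ _) (Int.gcd_dvd_left (a := h') (b := -e - 4 * h))
    have d3 : ((Int.gcd w' (Int.gcd h' (-e - 4 * h)) : ℤ)) ∣ (Int.gcd w' h' : ℤ) :=
      Int.dvd_coe_gcd d1 d2
    have hlt1 : (1 : ℤ) < (Int.gcd w' h' : ℤ) := by
      have := Int.le_of_dvd hgw d3
      have h2' : (2 : ℤ) ≤ (Int.gcd w' (Int.gcd h' (-e - 4 * h)) : ℤ) := by exact_mod_cast hg2
      linarith
    refine ⟨w', 1, hw'pos, h'pos, zero_le_one, hlt1, ?_, ?_, hD'⟩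
    · show -e - 4 * h + 2 * h' < w'
      exact hEW
    · show gcd4 w' h' 1 (-e - 4 * h) = 1
      exact gcd4_one _ _ _

/-- From `gcd4 w h 0 e = 1` and `h ∣ w`, deduce `gcd(h,e) = 1`. -/
private lemma gcd_he (w h e : ℤ) (hdw : h ∣ w) (hg : gcd4 w h 0 e = 1) :
    Int.gcd h e = 1 := by
  rw [gcd4_zero] at hg
  have hd : ((Int.gcd h e : ℤ)) ∣ w := dvd_trans (Int.gcd_dvd_left _ _) hdw
  have : ((Int.gcd h e : ℤ)) ∣ (Int.gcd w (Int.gcd h e : ℤ) : ℤ) :=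
    Int.dvd_coe_gcd hd dvd_rfl
  have hnat : Int.gcd h e ∣ Int.gcd w (Int.gcd h e : ℤ) := by exact_mod_cast this
  rw [hg] at hnat
  exact Nat.dvd_one.mp hnat

/-- Explicit target prototype of the move `B_1` in the case `t = 0`, `h ∣ w`. -/
private lemma buildB (D w h e : ℤ) (hp : IsProto D (w, h, 0, e)) (hge : Int.gcd h e = 1) :
    IsProto D (w - e - 2 * h, h, 0, -e - 4 * h) := by
  obtain ⟨hw, hh, -, -, hew, hg, hDe⟩ := hp
  simp only at hw hh hew hg hDe
  have hwe : 0 < w - e - 2 * h := by linarith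
  refine ⟨hwe, hh, le_refl 0, ?_, ?_, ?_, by linear_combination hDe⟩
  · show (0 : ℤ) < (Int.gcd (w - e - 2 * h) h : ℤ)
    exact_mod_cast Int.gcd_pos_iff.mpr (Or.inl hwe.ne')
  · show -e - 4 * h + 2 * h < w - e - 2 * h
    linarith
  · show gcd4 (w - e - 2 * h) h 0 (-e - 4 * h) = 1
    rw [gcd4_zero]
    have h1 : Int.gcd h (-e - 4 * h) = 1 := by
      rw [show -e - 4 * h = -e + h * (-4) by ring, gcd_shift]
      simpa using hge
    rw [h1]
    simp [Int.gcd]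

/-- One reduction step: from a prototype with `h > 1`, reach one with smaller `h`. -/
private lemma step (D : ℤ) (p : ℤ × ℤ × ℤ × ℤ) (hp : IsProto D p) (h1 : 1 < p.2.1) :
    ∃ p', IsProto D p' ∧ p'.2.1 < p.2.1 ∧ Relation.EqvGen (Butterfly D) p p' := by
  obtain ⟨w, h, t, e⟩ := p
  have hp0 := hp
  obtain ⟨hw, hh, ht0, htlt, hew, hg, hDe⟩ := hp0
  simp only at hw hh ht0 htlt hew hg hDe h1
  have hgwh : (Int.gcd w h : ℤ) ≤ h := Int.le_of_dvd hh (Int.gcd_dvd_right _ _)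
  rcases ht0.lt_or_eq with htpos | ht0'
  -- Case t > 0 : use B_∞
  · set g : ℤ := (Int.gcd t h : ℤ) with hgdef
    have hgpos : 0 < g := by
      show (0:ℤ) < (Int.gcd t h : ℤ)
      exact_mod_cast Int.gcd_pos_iff.mpr (Or.inr hh.ne')
    have hgdvh : g ∣ h := Int.gcd_dvd_right _ _
    have hgle : g ≤ h := Int.le_of_dvd hh hgdvh
    have hglt : g < h := by
      have : g ≤ t := Int.le_of_dvd htpos (Int.gcd_dvd_left _ _)
      linarith
    obtain ⟨w', t', hp'⟩ := build D w h t e g hp hgpos hgle (hgdvh.mul_right _)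
    · refine ⟨(w', g, t', -e - 4 * h), hp', hglt, Relation.EqvGen.rel _ _ ⟨hp, hp', Or.inr ⟨?_, ?_⟩⟩⟩
      · show -e - 4 * h = -e - 4 * h
        rfl
      · show g = (Int.gcd t h : ℤ)
        rfl
  -- Case t = 0
  · subst ht0'
    by_cases hdw : h ∣ w
    -- Case h ∣ w : two moves B₁
    · have hge : Int.gcd h e = 1 := gcd_he w h e hdw hg
      have hpB := buildB D w h e hp hge
      have move1 : Butterfly D (w, h, 0, e) (w - e - 2 * h, h, 0, -e - 4 * h) := by
        refine ⟨hp, hpB, Or.inl ⟨1, one_pos, ?_, by ring, ?_⟩⟩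
        · show (e + 4 * 1 * h) ^ 2 < D
          nlinarith [mul_pos hh (show (0:ℤ) < w - e - 2 * h by linarith)]
        · show (h : ℤ) = (Int.gcd (1 * h) (w + 1 * 0) : ℤ)
          rw [one_mul]
          norm_num
          rw [Int.gcd_eq_natAbs_left hdw]
          exact (Int.natAbs_of_nonneg hh.le).symm
      -- second move from p' = (w-e-2h, h, 0, -e-4h)
      have hndvd : ¬ h ∣ (w - e - 2 * h) := by
        intro hd
        have hde : h ∣ e := by
          have : e = w - (w - e - 2 * h) - 2 * h := by ring
          rw [this]
          exact dvd_sub (dvd_sub hdw hd) (Dvd.intro 2 (by ring))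
        have : h.natAbs ∣ Int.gcd h e := Nat.dvd_gcd dvd_rfl (Int.natAbs_dvd_natAbs.mpr hde)
        rw [hge] at this
        have := Nat.dvd_one.mp this
        omega
      set g2 : ℤ := (Int.gcd h (w - e - 2 * h) : ℤ) with hg2def
      have hg2pos : 0 < g2 := by
        show (0:ℤ) < (Int.gcd h (w - e - 2 * h) : ℤ)
        exact_mod_cast Int.gcd_pos_iff.mpr (Or.inl hh.ne')
      have hg2dvh : g2 ∣ h := Int.gcd_dvd_left _ _
      have hg2le : g2 ≤ h := Int.le_of_dvd hh hg2dvh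
      have hg2lt : g2 < h := by
        have hdvd2 : g2 ∣ (w - e - 2 * h) := Int.gcd_dvd_right _ _
        have hne : g2 ≠ h := fun heq => hndvd (heq ▸ hdvd2)
        omega
      obtain ⟨w'', t'', hp2⟩ := build D (w - e - 2 * h) h 0 (-e - 4 * h) g2 hpB hg2pos hg2le
        (hg2dvh.mul_right _)
      have move2 : Butterfly D (w - e - 2 * h, h, 0, -e - 4 * h)
          (w'', g2, t'', -(-e - 4 * h) - 4 * h) := by
        refine ⟨hpB, hp2, Or.inl ⟨1, one_pos, ?_, by push_cast; ring, ?_⟩⟩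
        · show ((-e - 4 * h) + 4 * 1 * h) ^ 2 < D
          nlinarith [mul_pos hw hh]
        · show g2 = (Int.gcd (1 * h) ((w - e - 2 * h) + 1 * 0) : ℤ)
          rw [one_mul]
          norm_num
          simp [hg2def]
      exact ⟨(w'', g2, t'', -(-e - 4 * h) - 4 * h), hp2, hg2lt,
        Relation.EqvGen.trans _ _ _ (Relation.EqvGen.rel _ _ move1) (Relation.EqvGen.rel _ _ move2)⟩
    -- Case ¬ h ∣ w : single move B₁
    · set g1 : ℤ := (Int.gcd h w : ℤ) with hg1def
      have hg1pos : 0 < g1 := by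
        show (0:ℤ) < (Int.gcd h w : ℤ)
        exact_mod_cast Int.gcd_pos_iff.mpr (Or.inl hh.ne')
      have hg1dvh : g1 ∣ h := Int.gcd_dvd_left _ _
      have hg1le : g1 ≤ h := Int.le_of_dvd hh hg1dvh
      have hg1lt : g1 < h := by
        have hdvd1 : g1 ∣ w := Int.gcd_dvd_right _ _
        have hne : g1 ≠ h := fun heq => hdw (heq ▸ hdvd1)
        omega
      obtain ⟨w', t', hp'⟩ := build D w h 0 e g1 hp hg1pos hg1le (hg1dvh.mul_right _)
      refine ⟨(w', g1, t', -e - 4 * h), hp', hg1lt,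
        Relation.EqvGen.rel _ _ ⟨hp, hp', Or.inl ⟨1, one_pos, ?_, by push_cast; ring, ?_⟩⟩⟩
      · show (e + 4 * 1 * h) ^ 2 < D
        nlinarith [mul_pos hh (show (0:ℤ) < w - e - 2 * h by linarith)]
      · show g1 = (Int.gcd (1 * h) (w + 1 * 0) : ℤ)
        rw [one_mul]
        norm_num
        exact hg1def

private lemma main_aux (D : ℤ) : ∀ n : ℕ, ∀ p : ℤ × ℤ × ℤ × ℤ, IsProto D p → p.2.1 ≤ (n : ℤ) →
    ∃ w e : ℤ, IsProto D (w, 1, 0, e) ∧ Relation.EqvGen (Butterfly D) p (w, 1, 0, e) := by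
  intro n
  induction n with
  | zero =>
    intro p hp hle
    exact absurd hp.2.1 (by exact_mod_cast not_lt.mpr hle)
  | succ n ih =>
    intro p hp hle
    rcases (show (1 : ℤ) ≤ p.2.1 from hp.2.1).lt_or_eq with h1 | h1
    · obtain ⟨p', hp', hlt, hrel⟩ := step D p hp h1
      obtain ⟨w, e, hred, hrel'⟩ := ih p' hp' (by push_cast at hle ⊢; omega)
      exact ⟨w, e, hred, Relation.EqvGen.trans _ _ _ hrel hrel'⟩
    · obtain ⟨w, h, t, e⟩ := p
      have hh1 : h = 1 := h1.symm
      subst hh1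
      have ht : t = 0 := by
        have h2 := hp.2.2.1
        have h3 := hp.2.2.2.1
        simp only at h2 h3
        simp [Int.gcd] at h3
        omega
      subst ht
      exact ⟨w, e, hp, Relation.EqvGen.refl _⟩

end ButterflyAux

/-- Every prototype in `𝒫_D` is equivalent, under the equivalence relation generated
by the Butterfly moves, to a reduced prototype `(w, 1, 0, e) ∈ 𝒫_D`. -/
theorem stmt2 (D : ℤ) (hD : 0 < D) (p : ℤ × ℤ × ℤ × ℤ) (hp : IsProto D p) :
    ∃ w e : ℤ, IsProto D (w, 1, 0, e) ∧
      Relation.EqvGen (Butterfly D) p (w, 1, 0, e) := by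
  exact main_aux D p.2.1.toNat p hp (Int.self_le_toNat _)
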